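/- (Proposition 3, vanishing of the randomizer at the first optimal time.) Let η_0,…,η_J be randomizers satisfying η_j ≤ Y*_j − Z_j + A*_j almost surely for every j = 0,…,J, and let τ* := inf{ i ≥ 0 : Z_i ≥ E[Y*_{i+1} | F_i] } (with Y*_{J+1} := 0) be the first optimal stopping time. Then η_{τ*} = 0 almost surely. Moreover, if τ* is strict in the sense that Y*_{τ*} − E[Y*_{τ*+1} | F_{τ*}] > 0 almost surely, then almost surely Y*_j − Z_j + A*_j > 0 for every j ≠ τ*, so that j = τ* is the only time at which η_j = 0 is forced. -/

import Mathlib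

open MeasureTheory Finset

/-- **Proposition 3, vanishing of the randomizer at the first optimal time.** Let `η 0,…,η J`
be randomizers (integrable random variables with `E[η j | ℱ J] = 0`) satisfying
`η j ≤ Y j − Z j + A⋆ j` almost surely for every `j = 0,…,J`, and let
`τ⋆ = inf{ i ≥ 0 : Z i ≥ E[Y (i+1) | ℱ i] }` (with `Y (J+1) := 0`) be the first optimal
stopping time. Then `η τ⋆ = 0` almost surely. Moreover, if `τ⋆` is strict in the sense that
`Y τ⋆ − E[Y (τ⋆+1) | ℱ τ⋆] > 0` almost surely, then almost surely
`Y j − Z j + A⋆ j > 0` for every `j ≠ τ⋆` with `j ≤ J`, so `j = τ⋆` is the only time at which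
`η j = 0` is forced. -/
theorem randomizer_vanishes_at_first_optimal_time
    {Ω : Type*} {mΩ : MeasurableSpace Ω} {μ : Measure Ω} [IsProbabilityMeasure μ]
    (J : ℕ) (ℱ : Filtration ℕ mΩ)
    (hF0 : ∀ s : Set Ω, MeasurableSet[ℱ 0] s → μ s = 0 ∨ μ s = 1)
    (Z Y Astar : ℕ → Ω → ℝ)
    (hZ_adapted : Adapted ℱ Z)
    (hZ_int : ∀ j, Integrable (Z j) μ)
    (hYJ : ∀ ω, Y J ω = Z J ω)
    (hY : ∀ j, j < J → ∀ ω, Y j ω = max (Z j ω) ((μ[Y (j + 1) | ℱ j]) ω))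
    (hAstar : ∀ j ω, Astar j ω =
      ∑ l ∈ Finset.range j, (Y l ω - (μ[Y (l + 1) | ℱ l]) ω))
    -- the continuation value `C i = E[Y (i+1) | ℱ i]`, with the convention `Y (J+1) := 0`
    (C : ℕ → Ω → ℝ)
    (hC : ∀ i, i < J → C i = μ[Y (i + 1) | ℱ i])
    (hCJ : ∀ ω, C J ω = 0)
    -- the first optimal stopping time `τ⋆ = inf{ i ≥ 0 : Z i ≥ E[Y (i+1) | ℱ i] }`
    (τs : Ω → ℕ)
    (hτs : ∀ ω, τs ω ≤ J ∧ C (τs ω) ω ≤ Z (τs ω) ω ∧ ∀ i, i < τs ω → Z i ω < C i ω)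
    -- the randomizers
    (η : ℕ → Ω → ℝ)
    (hη_int : ∀ j, Integrable (η j) μ)
    (hη_mean : ∀ j, μ[η j | ℱ J] =ᵐ[μ] 0)
    (hη_le : ∀ j, j ≤ J → ∀ᵐ ω ∂μ, η j ω ≤ Y j ω - Z j ω + Astar j ω) :
    (∀ᵐ ω ∂μ, η (τs ω) ω = 0) ∧
    ((∀ᵐ ω ∂μ, 0 < Y (τs ω) ω - C (τs ω) ω) →
      ∀ᵐ ω ∂μ, ∀ j, j ≤ J → j ≠ τs ω → 0 < Y j ω - Z j ω + Astar j ω) := by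
  have hm : ℱ J ≤ mΩ := ℱ.le J
  -- strong measurability of C j w.r.t. ℱ J
  have hCsm : ∀ j, j ≤ J → StronglyMeasurable[ℱ J] (C j) := by
    intro j hj
    rcases lt_or_eq_of_le hj with h | h
    · rw [hC j h]; exact stronglyMeasurable_condExp.mono (ℱ.mono h.le)
    · have : C j = fun _ => (0 : ℝ) := by rw [h]; exact funext hCJ
      rw [this]; exact stronglyMeasurable_const
  have hZsm : ∀ j, j ≤ J → StronglyMeasurable[ℱ J] (Z j) :=
    fun j hj => ((hZ_adapted j).mono (ℱ.mono hj) le_rfl).stronglyMeasurable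
  -- the set {τs = j} is ℱ J-measurable
  have hset : ∀ j, j ≤ J → MeasurableSet[ℱ J] {ω | τs ω = j} := by
    intro j hj
    have heq : {ω | τs ω = j} =
        ({ω | C j ω ≤ Z j ω} ∩ ⋂ i ∈ Finset.range j, {ω | Z i ω < C i ω}) := by
      ext ω
      simp only [Set.mem_setOf_eq, Set.mem_inter_iff, Set.mem_iInter, Finset.mem_range]
      constructor
      · rintro rfl
        exact ⟨(hτs ω).2.1, fun i hi => (hτs ω).2.2 i hi⟩
      · rintro ⟨h1, h2⟩
        by_contra hne
        rcases lt_or_gt_of_ne hne with hlt | hgt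
        · exact absurd (hτs ω).2.1 (not_le.mpr (h2 _ hlt))
        · exact absurd h1 (not_le.mpr ((hτs ω).2.2 j hgt))
    rw [heq]
    refine MeasurableSet.inter (measurableSet_le (hCsm j hj).measurable
      (hZsm j hj).measurable) ?_
    refine MeasurableSet.iInter fun i => MeasurableSet.iInter fun hi => ?_
    have hiJ : i ≤ J := le_of_lt (lt_of_lt_of_le (Finset.mem_range.mp hi) hj)
    exact measurableSet_lt (hZsm i hiJ).measurable (hCsm i hiJ).measurable
  -- pointwise: each Doob increment is nonnegative
  have hInc : ∀ l, l < J → ∀ ω, 0 ≤ Y l ω - (μ[Y (l + 1) | ℱ l]) ω := by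
    intro l hl ω
    rw [hY l hl ω]
    simp [le_max_right]
  have hAnonneg : ∀ j, j ≤ J → ∀ ω, 0 ≤ Astar j ω := by
    intro j hj ω
    rw [hAstar]
    refine Finset.sum_nonneg fun l hl => ?_
    exact hInc l (lt_of_lt_of_le (Finset.mem_range.mp hl) hj) ω
  have hYZge : ∀ j, j ≤ J → ∀ ω, Z j ω ≤ Y j ω := by
    intro j hj ω
    rcases lt_or_eq_of_le hj with h | h
    · rw [hY j h ω]; exact le_max_left _ _
    · subst h; rw [hYJ ω]
  -- at τs the bound vanishes identically
  have hBzero : ∀ ω, Y (τs ω) ω - Z (τs ω) ω + Astar (τs ω) ω = 0 := by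
    intro ω
    obtain ⟨hle, hCZ, hlt⟩ := hτs ω
    have hA : Astar (τs ω) ω = 0 := by
      rw [hAstar]
      refine Finset.sum_eq_zero fun l hl => ?_
      rw [Finset.mem_range] at hl
      have hlJ : l < J := lt_of_lt_of_le hl hle
      have hZC := hlt l hl
      rw [hC l hlJ] at hZC
      rw [hY l hlJ ω, max_eq_right (le_of_lt hZC)]
      ring
    have hYZ : Y (τs ω) ω = Z (τs ω) ω := by
      rcases lt_or_eq_of_le hle with h | h
      · rw [hY _ h ω, max_eq_left]
        rw [← hC _ h]; exact hCZ
      · rw [h]; exact hYJ ω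
    rw [hA, hYZ]; ring
  -- key: η j = 0 a.e. on {τs = j}
  have key : ∀ j, j ≤ J → ∀ᵐ ω ∂μ, τs ω = j → η j ω = 0 := by
    intro j hj
    set s : Set Ω := {ω | τs ω = j} with hs_def
    have hsj : MeasurableSet[ℱ J] s := hset j hj
    have hsm : MeasurableSet s := hm _ hsj
    have hint : Integrable (s.indicator (η j)) μ := (hη_int j).indicator hsm
    have hle0 : ∀ᵐ ω ∂μ, s.indicator (η j) ω ≤ 0 := by
      filter_upwards [hη_le j hj] with ω hω
      by_cases hωs : ω ∈ s
      · rw [Set.indicator_of_mem hωs]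
        have hB := hBzero ω
        have hτj : τs ω = j := hωs
        rw [hτj] at hB
        linarith
      · rw [Set.indicator_of_notMem hωs]
    have hI0 : ∫ ω, s.indicator (η j) ω ∂μ = 0 := by
      rw [integral_indicator hsm]
      rw [← setIntegral_condExp hm (hη_int j) hsj]
      rw [setIntegral_congr_ae hsm ((hη_mean j).mono fun ω h _ => h)]
      simp
    have hnn : 0 ≤ᵐ[μ] fun ω => -s.indicator (η j) ω := by
      filter_upwards [hle0] with ω hω
      simpa using hω
    have hIneg : ∫ ω, -s.indicator (η j) ω ∂μ = 0 := by
      rw [integral_neg, hI0, neg_zero]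
    have hz := (integral_eq_zero_iff_of_nonneg_ae hnn hint.neg).mp hIneg
    filter_upwards [hz] with ω hω hτj
    have hωs : ω ∈ s := hτj
    have : s.indicator (η j) ω = 0 := by
      have : -s.indicator (η j) ω = 0 := hω
      linarith
    rwa [Set.indicator_of_mem hωs] at this
  constructor
  · have hall : ∀ᵐ ω ∂μ, ∀ j, j ≤ J → τs ω = j → η j ω = 0 := by
      rw [ae_all_iff]
      intro j
      by_cases hj : j ≤ J
      · filter_upwards [key j hj] with ω hω _
        exact hω
      · filter_upwards with ω
        intro hω
        exact absurd hω hj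
    filter_upwards [hall] with ω hω
    exact hω (τs ω) (hτs ω).1 rfl
  · intro hstrict
    filter_upwards [hstrict] with ω hω j hj hne
    obtain ⟨hle, hCZ, hlt⟩ := hτs ω
    rcases lt_or_gt_of_ne hne with hjlt | hjgt
    · -- j < τs ω
      have hjJ : j < J := lt_of_lt_of_le hjlt hle
      have hZC := hlt j hjlt
      rw [hC j hjJ] at hZC
      have hYj : Y j ω = (μ[Y (j + 1) | ℱ j]) ω := by
        rw [hY j hjJ ω, max_eq_right (le_of_lt hZC)]
      have hA := hAnonneg j (le_of_lt hjJ) ω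
      rw [hYj]
      linarith
    · -- τs ω < j
      have hτJ : τs ω < J := lt_of_lt_of_le hjgt hj
      have hτmem : τs ω ∈ Finset.range j := Finset.mem_range.mpr hjgt
      have hAge : Y (τs ω) ω - (μ[Y (τs ω + 1) | ℱ (τs ω)]) ω ≤ Astar j ω := by
        rw [hAstar]
        refine Finset.single_le_sum (f := fun l => Y l ω - (μ[Y (l + 1) | ℱ l]) ω) (fun l hl => ?_) hτmem
        exact hInc l (lt_of_lt_of_le (Finset.mem_range.mp hl) hj) ω
      have hCτ : C (τs ω) ω = (μ[Y (τs ω + 1) | ℱ (τs ω)]) ω := by rw [hC _ hτJ]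
      have hYZ := hYZge j hj ω
      rw [hCτ] at hω
      linarith
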